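/- Let G be a finite connected simple graph admitting an isometric embedding φ : V(G) → {0,1}^n with d_G(u,v) equal to the Hamming distance of φ(u), φ(v) for all u, v. For coordinates k ≠ l and values i, j ∈ {0,1}, let m_{kl}^{ij} be the number of edges e = ab of G with φ(a)_k = φ(b)_k = i and φ(a)_l = φ(b)_l = j. Then Σ_{e ∈ E(G)} Σ_{f ∈ E(G)} d̂(e,f)² = 2·Ŵ_e(G) + 4·Σ_{1 ≤ k < l ≤ n} ( m_{kl}^{11}·m_{kl}^{00} + m_{kl}^{10}·m_{kl}^{01} ). -/

import Mathlib

open scoped Classical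

/-- The minimum distance between endpoints of two edges (given as unordered pairs):
`d̂(ab, xy) = min {d(a,x), d(a,y), d(b,x), d(b,y)}`. -/
noncomputable def edgeDhat {V : Type*} (G : SimpleGraph V) : Sym2 V → Sym2 V → ℕ :=
  Sym2.lift₂
    ⟨fun a b x y => min (min (G.dist a x) (G.dist a y)) (min (G.dist b x) (G.dist b y)),
      fun a b x y => by dsimp only; constructor <;> omega⟩

/-- The finset of edges of a graph on a finite vertex type. -/
noncomputable def edgeFS {V : Type*} [Fintype V] (G : SimpleGraph V) : Finset (Sym2 V) :=
  (Set.toFinite G.edgeSet).toFinset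

/-- `Ŵ_e(G) = Σ_{{e,f} ⊆ E(G)} d̂(e,f)`, the sum over unordered pairs of distinct edges
(computed as half of the sum over ordered pairs of distinct edges). -/
noncomputable def hatEdgeWiener {V : Type*} [Fintype V] (G : SimpleGraph V) : ℚ :=
  (∑ p ∈ (edgeFS G).offDiag, (edgeDhat G p.1 p.2 : ℚ)) / 2

/-- `m_{kl}^{ij}`: the number of edges `e = ab` of `G` both of whose endpoints have `k`-th
coordinate equal to `i` and `l`-th coordinate equal to `j` under the embedding `φ`. -/
noncomputable def mSide {V : Type*} [Fintype V] (G : SimpleGraph V) {n : ℕ}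
    (φ : V → Fin n → Bool) (k l : Fin n) (i j : Bool) : ℕ :=
  ((edgeFS G).filter (fun e => ∀ v ∈ e, φ v k = i ∧ φ v l = j)).card

/-! ### Auxiliary material -/

section Aux

set_option linter.unusedSectionVars false

open Finset

lemma bool3 : ∀ a b c : Bool, a ≠ b → c ≠ b → a = c := by decide

/-- The key pointwise boolean identity. -/
lemma pt_bool (pk pl qk ql rk rl sk sl : Bool) :
    (if ((pk ≠ rk ∧ pk ≠ sk ∧ qk ≠ rk ∧ qk ≠ sk) ∧ (pl ≠ rl ∧ pl ≠ sl ∧ ql ≠ rl ∧ ql ≠ sl))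
      then (1 : ℕ) else 0) =
    ∑ i : Bool, ∑ j : Bool,
      (if (((pk = i ∧ pl = j) ∧ (qk = i ∧ ql = j)) ∧ ((rk = !i ∧ rl = !j) ∧ (sk = !i ∧ sl = !j)))
        then (1 : ℕ) else 0) := by
  revert pk pl qk ql rk rl sk sl; decide

variable {V : Type*} [Fintype V] {n : ℕ} (G : SimpleGraph V) (φ : V → Fin n → Bool)

lemma mem_edgeFS {e : Sym2 V} : e ∈ edgeFS G ↔ e ∈ G.edgeSet := Set.Finite.mem_toFinset _

lemma edge_flip (hφ : ∀ u v : V, G.dist u v = hammingDist (φ u) (φ v))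
    {a b : V} (hab : G.Adj a b) : ∃ k0 : Fin n, ∀ k, φ a k ≠ φ b k ↔ k = k0 := by
  have h1 : hammingDist (φ a) (φ b) = 1 := by
    rw [← hφ]; exact SimpleGraph.dist_eq_one_iff_adj.2 hab
  rw [hammingDist, Finset.card_eq_one] at h1
  obtain ⟨k0, hk0⟩ := h1
  refine ⟨k0, fun k => ?_⟩
  constructor
  · intro h
    have : k ∈ ({k0} : Finset (Fin n)) := by rw [← hk0]; simp [h]
    simpa using this
  · rintro rfl
    have : k ∈ Finset.filter (fun i => φ a i ≠ φ b i) Finset.univ := by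
      rw [hk0]; simp
    simpa using this

/-- The set of coordinates on which the edges `e` and `f` lie on strictly opposite sides. -/
noncomputable def Dset (e f : Sym2 V) : Finset (Fin n) :=
  Finset.univ.filter (fun k => ∀ v ∈ e, ∀ w ∈ f, φ v k ≠ φ w k)

lemma mem_Dset_mk (a b x y : V) (m : Fin n) :
    m ∈ Dset φ s(a, b) s(x, y) ↔
      (φ a m ≠ φ x m ∧ φ a m ≠ φ y m ∧ φ b m ≠ φ x m ∧ φ b m ≠ φ y m) := by
  unfold Dset
  rw [Finset.mem_filter]
  simp only [Finset.mem_univ, true_and]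
  constructor
  · intro h
    exact ⟨h a (by simp) x (by simp), h a (by simp) y (by simp),
      h b (by simp) x (by simp), h b (by simp) y (by simp)⟩
  · rintro ⟨h1, h2, h3, h4⟩ v hv w hw
    rw [Sym2.mem_iff] at hv hw
    rcases hv with rfl | rfl <;> rcases hw with rfl | rfl <;> assumption

lemma edgeDhat_eq_card (hφ : ∀ u v : V, G.dist u v = hammingDist (φ u) (φ v))
    {a b x y : V} (hab : G.Adj a b) (hxy : G.Adj x y) :
    edgeDhat G s(a, b) s(x, y) = (Dset φ s(a, b) s(x, y)).card := by
  obtain ⟨ke, hke⟩ := edge_flip G φ hφ hab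
  obtain ⟨kf, hkf⟩ := edge_flip G φ hφ hxy
  have hunf : edgeDhat G s(a, b) s(x, y) =
      min (min (G.dist a x) (G.dist a y)) (min (G.dist b x) (G.dist b y)) := rfl
  have hD : Dset φ s(a, b) s(x, y) = Finset.univ.filter
      (fun k => φ a k ≠ φ x k ∧ φ a k ≠ φ y k ∧ φ b k ≠ φ x k ∧ φ b k ≠ φ y k) := by
    ext m
    rw [mem_Dset_mk, Finset.mem_filter]
    simp only [Finset.mem_univ, true_and]
  have hlow : ∀ u w : V, (u = a ∨ u = b) → (w = x ∨ w = y) →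
      (Dset φ s(a, b) s(x, y)).card ≤ hammingDist (φ u) (φ w) := by
    intro u w hu hw
    rw [hammingDist]
    apply Finset.card_le_card
    intro k hk
    rw [hD, Finset.mem_filter] at hk
    rw [Finset.mem_filter]
    refine ⟨Finset.mem_univ _, ?_⟩
    rcases hu with rfl | rfl <;> rcases hw with rfl | rfl <;> tauto
  have key : ∃ u w : V, (u = a ∨ u = b) ∧ (w = x ∨ w = y) ∧
      φ u ke = φ w ke ∧ φ u kf = φ w kf := by
    by_cases hkk : ke = kf
    · subst hkk
      by_cases h : φ x ke = φ a ke
      · exact ⟨a, x, Or.inl rfl, Or.inl rfl, h.symm, h.symm⟩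
      · have hxy' : φ x ke ≠ φ y ke := (hkf ke).2 rfl
        have hay : φ a ke = φ y ke := bool3 _ _ _ (Ne.symm h) (Ne.symm hxy')
        exact ⟨a, y, Or.inl rfl, Or.inr rfl, hay, hay⟩
    · have hxc : φ x ke = φ y ke := by
        by_contra h; exact hkk (((hkf ke).1 h) ▸ rfl)
      have hac : φ a kf = φ b kf := by
        by_contra h; exact hkk (((hke kf).1 h).symm)
      by_cases h1 : φ a ke = φ x ke
      · by_cases h2 : φ x kf = φ a kf
        · exact ⟨a, x, Or.inl rfl, Or.inl rfl, h1, h2.symm⟩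
        · have hy : φ y kf = φ a kf :=
            bool3 _ _ _ (Ne.symm ((hkf kf).2 rfl)) (Ne.symm h2)
          exact ⟨a, y, Or.inl rfl, Or.inr rfl, h1.trans hxc, hy.symm⟩
      · have hb : φ b ke = φ x ke :=
          bool3 _ _ _ (Ne.symm ((hke ke).2 rfl)) (Ne.symm h1)
        by_cases h2 : φ x kf = φ b kf
        · exact ⟨b, x, Or.inr rfl, Or.inl rfl, hb, h2.symm⟩
        · have hy : φ y kf = φ b kf :=
            bool3 _ _ _ (Ne.symm ((hkf kf).2 rfl)) (Ne.symm h2)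
          exact ⟨b, y, Or.inr rfl, Or.inr rfl, hb.trans hxc, hy.symm⟩
  obtain ⟨u, w, hu, hw, h1, h2⟩ := key
  have hdiff : Finset.univ.filter (fun k => φ u k ≠ φ w k) = Dset φ s(a, b) s(x, y) := by
    rw [hD]
    apply Finset.filter_congr
    intro k _
    by_cases hk1 : k = ke
    · subst hk1
      constructor
      · intro hcon; exact absurd h1 hcon
      · rintro ⟨c1, c2, c3, c4⟩
        exact absurd (bool3 _ _ _ c1 c3) ((hke k).2 rfl)
    · by_cases hk2 : k = kf
      · subst hk2
        constructor
        · intro hcon; exact absurd h2 hcon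
        · rintro ⟨c1, c2, c3, c4⟩
          exact absurd (bool3 _ _ _ (Ne.symm c1) (Ne.symm c2)) ((hkf k).2 rfl)
      · have e1 : φ a k = φ b k := by by_contra h; exact hk1 ((hke k).1 h)
        have e2 : φ x k = φ y k := by by_contra h; exact hk2 ((hkf k).1 h)
        have e3 : φ u k = φ a k := by rcases hu with rfl | rfl; exacts [rfl, e1.symm]
        have e4 : φ w k = φ x k := by rcases hw with rfl | rfl; exacts [rfl, e2.symm]
        rw [e3, e4, ← e1, ← e2]
        tauto
  have hH : hammingDist (φ u) (φ w) = (Dset φ s(a, b) s(x, y)).card := by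
    rw [hammingDist]; exact congrArg Finset.card hdiff
  refine le_antisymm ?_ ?_
  · rw [hunf, ← hH, ← hφ]
    rcases hu with rfl | rfl <;> rcases hw with rfl | rfl <;> simp [min_le_iff]
  · rw [hunf]
    simp only [le_min_iff, hφ]
    exact ⟨⟨hlow a x (Or.inl rfl) (Or.inl rfl), hlow a y (Or.inl rfl) (Or.inr rfl)⟩,
      hlow b x (Or.inr rfl) (Or.inl rfl), hlow b y (Or.inr rfl) (Or.inr rfl)⟩

lemma edgeDhat_eq_card' (hφ : ∀ u v : V, G.dist u v = hammingDist (φ u) (φ v))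
    {e f : Sym2 V} (he : e ∈ edgeFS G) (hf : f ∈ edgeFS G) :
    edgeDhat G e f = (Dset φ e f).card := by
  rw [mem_edgeFS] at he hf
  revert he hf
  induction e, f using Sym2.inductionOn₂ with
  | _ a b x y =>
    intro he hf
    exact edgeDhat_eq_card G φ hφ ((G.mem_edgeSet).1 he) ((G.mem_edgeSet).1 hf)

lemma edgeDhat_self (e : Sym2 V) : edgeDhat G e e = 0 := by
  induction e using Sym2.inductionOn with
  | hf a b =>
    have : edgeDhat G s(a, b) s(a, b) =
        min (min (G.dist a a) (G.dist a b)) (min (G.dist b a) (G.dist b b)) := rfl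
    rw [this]
    simp [SimpleGraph.dist_self]

/-- The "square expansion" for the cardinality of a finset. -/
lemma sq_card {α : Type*} [Fintype α] [DecidableEq α] (A : Finset α) :
    ((A.card : ℚ)) ^ 2 = (A.card : ℚ) +
      ∑ p ∈ (Finset.univ : Finset (α × α)).filter (fun p => p.1 ≠ p.2),
        (if p.1 ∈ A ∧ p.2 ∈ A then (1 : ℚ) else 0) := by
  have h1 : ∑ p ∈ (Finset.univ : Finset (α × α)).filter (fun p => p.1 ≠ p.2),
      (if p.1 ∈ A ∧ p.2 ∈ A then (1 : ℚ) else 0) = (A.offDiag.card : ℚ) := by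
    rw [Finset.sum_boole]
    congr 1
    congr 1
    ext p
    simp only [Finset.mem_filter, Finset.mem_univ, true_and, Finset.mem_offDiag]
    tauto
  rw [h1, Finset.offDiag_card]
  have hle : A.card ≤ A.card * A.card := by
    rcases Nat.eq_zero_or_pos A.card with h | h
    · simp [h]
    · exact Nat.le_mul_of_pos_left _ h
  rw [Nat.cast_sub hle]
  push_cast
  ring

lemma sum_comm_three {ι₁ ι₂ ι₃ : Type*} (s₁ : Finset ι₁) (s₂ : Finset ι₂) (s₃ : Finset ι₃)
    (g : ι₁ → ι₂ → ι₃ → ℚ) :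
    (∑ a ∈ s₁, ∑ b ∈ s₂, ∑ c ∈ s₃, g a b c) = ∑ b ∈ s₂, ∑ c ∈ s₃, ∑ a ∈ s₁, g a b c := by
  rw [Finset.sum_comm]
  exact Finset.sum_congr rfl fun b _ => Finset.sum_comm

lemma ind_mul_ind (P Q : Prop) [Decidable P] [Decidable Q] :
    (if P then (1 : ℚ) else 0) * (if Q then (1 : ℚ) else 0) = if P ∧ Q then (1 : ℚ) else 0 := by
  by_cases hP : P <;> by_cases hQ : Q <;> simp [hP, hQ]

lemma pointwise_count (k l : Fin n) (e f : Sym2 V) :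
    (if k ∈ Dset φ e f ∧ l ∈ Dset φ e f then (1 : ℚ) else 0) =
    ∑ i : Bool, ∑ j : Bool,
      (if (∀ v ∈ e, φ v k = i ∧ φ v l = j) then (1 : ℚ) else 0) *
      (if (∀ w ∈ f, φ w k = !i ∧ φ w l = !j) then (1 : ℚ) else 0) := by
  induction e, f using Sym2.inductionOn₂ with
  | _ a b x y =>
    simp only [ind_mul_ind, mem_Dset_mk, Sym2.ball]
    exact_mod_cast pt_bool (φ a k) (φ a l) (φ b k) (φ b l) (φ x k) (φ x l) (φ y k) (φ y l)

lemma count_kl (k l : Fin n) :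
    (∑ e ∈ edgeFS G, ∑ f ∈ edgeFS G,
      (if k ∈ Dset φ e f ∧ l ∈ Dset φ e f then (1 : ℚ) else 0)) =
    ∑ i : Bool, ∑ j : Bool, (mSide G φ k l i j : ℚ) * (mSide G φ k l (!i) (!j) : ℚ) := by
  have : ∀ (i j : Bool),
      (∑ e ∈ edgeFS G, (if (∀ v ∈ e, φ v k = i ∧ φ v l = j) then (1 : ℚ) else 0)) =
        (mSide G φ k l i j : ℚ) := by
    intro i j
    rw [Finset.sum_boole]
    rfl
  calc (∑ e ∈ edgeFS G, ∑ f ∈ edgeFS G,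
      (if k ∈ Dset φ e f ∧ l ∈ Dset φ e f then (1 : ℚ) else 0))
      = ∑ e ∈ edgeFS G, ∑ f ∈ edgeFS G, ∑ i : Bool, ∑ j : Bool,
          (if (∀ v ∈ e, φ v k = i ∧ φ v l = j) then (1 : ℚ) else 0) *
          (if (∀ w ∈ f, φ w k = !i ∧ φ w l = !j) then (1 : ℚ) else 0) := by
        exact Finset.sum_congr rfl fun e _ => Finset.sum_congr rfl fun f _ =>
          pointwise_count φ k l e f
    _ = ∑ i : Bool, ∑ j : Bool, ∑ e ∈ edgeFS G, ∑ f ∈ edgeFS G,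
          (if (∀ v ∈ e, φ v k = i ∧ φ v l = j) then (1 : ℚ) else 0) *
          (if (∀ w ∈ f, φ w k = !i ∧ φ w l = !j) then (1 : ℚ) else 0) := by
        rw [sum_comm_three (edgeFS G) (edgeFS G) Finset.univ,
          sum_comm_three (edgeFS G) Finset.univ (edgeFS G)]
        refine Finset.sum_congr rfl fun i _ => ?_
        rw [sum_comm_three (edgeFS G) (edgeFS G) Finset.univ,
          sum_comm_three (edgeFS G) Finset.univ (edgeFS G)]
    _ = ∑ i : Bool, ∑ j : Bool, (mSide G φ k l i j : ℚ) * (mSide G φ k l (!i) (!j) : ℚ) := by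
        refine Finset.sum_congr rfl fun i _ => Finset.sum_congr rfl fun j _ => ?_
        rw [← Finset.sum_mul_sum, this i j, this (!i) (!j)]

lemma mSide_symm (k l : Fin n) (i j : Bool) : mSide G φ l k j i = mSide G φ k l i j := by
  unfold mSide
  congr 1
  apply Finset.filter_congr
  intro e _
  constructor
  · intro h v hv; exact ⟨(h v hv).2, (h v hv).1⟩
  · intro h v hv; exact ⟨(h v hv).2, (h v hv).1⟩

end Aux

/-- For a partial cube `G` (isometrically embedded in `{0,1}^n` via `φ`):
`Σ_{e ∈ E(G)} Σ_{f ∈ E(G)} d̂(e,f)² =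
  2·Ŵ_e(G) + 4·Σ_{1 ≤ k < l ≤ n} (m_{kl}^{11}·m_{kl}^{00} + m_{kl}^{10}·m_{kl}^{01})`. -/
theorem sum_edgeDhat_sq {V : Type*} [Fintype V] (n : ℕ) (G : SimpleGraph V)
    (hG : G.Connected) (φ : V → Fin n → Bool)
    (hφ : ∀ u v : V, G.dist u v = hammingDist (φ u) (φ v)) :
    (∑ e ∈ edgeFS G, ∑ f ∈ edgeFS G, (edgeDhat G e f : ℚ) ^ 2) =
      2 * hatEdgeWiener G +
        4 * ∑ p ∈ (Finset.univ : Finset (Fin n × Fin n)).filter (fun p => p.1 < p.2),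
            ((mSide G φ p.1 p.2 true true * mSide G φ p.1 p.2 false false : ℕ) +
             (mSide G φ p.1 p.2 true false * mSide G φ p.1 p.2 false true : ℕ) : ℚ) := by
  classical
  -- Step 1: expand squares
  have step1 : (∑ e ∈ edgeFS G, ∑ f ∈ edgeFS G, (edgeDhat G e f : ℚ) ^ 2) =
      (∑ e ∈ edgeFS G, ∑ f ∈ edgeFS G, (edgeDhat G e f : ℚ)) +
      ∑ p ∈ (Finset.univ : Finset (Fin n × Fin n)).filter (fun p => p.1 ≠ p.2),
        ∑ e ∈ edgeFS G, ∑ f ∈ edgeFS G,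
          (if p.1 ∈ Dset φ e f ∧ p.2 ∈ Dset φ e f then (1 : ℚ) else 0) := by
    calc (∑ e ∈ edgeFS G, ∑ f ∈ edgeFS G, (edgeDhat G e f : ℚ) ^ 2)
        = ∑ e ∈ edgeFS G, ∑ f ∈ edgeFS G, ((edgeDhat G e f : ℚ) +
            ∑ p ∈ (Finset.univ : Finset (Fin n × Fin n)).filter (fun p => p.1 ≠ p.2),
              (if p.1 ∈ Dset φ e f ∧ p.2 ∈ Dset φ e f then (1 : ℚ) else 0)) := by
          refine Finset.sum_congr rfl fun e he => Finset.sum_congr rfl fun f hf => ?_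
          rw [edgeDhat_eq_card' G φ hφ he hf]
          exact sq_card (Dset φ e f)
      _ = (∑ e ∈ edgeFS G, ∑ f ∈ edgeFS G, (edgeDhat G e f : ℚ)) +
            ∑ e ∈ edgeFS G, ∑ f ∈ edgeFS G,
              ∑ p ∈ (Finset.univ : Finset (Fin n × Fin n)).filter (fun p => p.1 ≠ p.2),
                (if p.1 ∈ Dset φ e f ∧ p.2 ∈ Dset φ e f then (1 : ℚ) else 0) := by
          rw [← Finset.sum_add_distrib]
          exact Finset.sum_congr rfl fun e _ => Finset.sum_add_distrib
      _ = (∑ e ∈ edgeFS G, ∑ f ∈ edgeFS G, (edgeDhat G e f : ℚ)) +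
            ∑ p ∈ (Finset.univ : Finset (Fin n × Fin n)).filter (fun p => p.1 ≠ p.2),
              ∑ e ∈ edgeFS G, ∑ f ∈ edgeFS G,
                (if p.1 ∈ Dset φ e f ∧ p.2 ∈ Dset φ e f then (1 : ℚ) else 0) := by
          congr 1
          rw [show (∑ e ∈ edgeFS G, ∑ f ∈ edgeFS G,
              ∑ p ∈ (Finset.univ : Finset (Fin n × Fin n)).filter (fun p => p.1 ≠ p.2),
                (if p.1 ∈ Dset φ e f ∧ p.2 ∈ Dset φ e f then (1 : ℚ) else 0)) =
            (∑ e ∈ edgeFS G,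
              ∑ p ∈ (Finset.univ : Finset (Fin n × Fin n)).filter (fun p => p.1 ≠ p.2),
                ∑ f ∈ edgeFS G,
                (if p.1 ∈ Dset φ e f ∧ p.2 ∈ Dset φ e f then (1 : ℚ) else 0)) from
            Finset.sum_congr rfl fun e _ => Finset.sum_comm]
          exact Finset.sum_comm
  -- Step 2: the linear term is twice the edge Wiener index
  have step2 : (∑ e ∈ edgeFS G, ∑ f ∈ edgeFS G, (edgeDhat G e f : ℚ)) = 2 * hatEdgeWiener G := by
    rw [hatEdgeWiener, mul_div_cancel₀ _ (two_ne_zero)]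
    rw [← Finset.sum_product']
    have : (edgeFS G).offDiag =
        ((edgeFS G) ×ˢ (edgeFS G)).filter (fun p => p.1 ≠ p.2) := by
        ext p; simp [Finset.mem_offDiag, and_assoc]
    rw [this]
    rw [← Finset.sum_filter_add_sum_filter_not ((edgeFS G) ×ˢ (edgeFS G))
      (fun p => p.1 ≠ p.2) (fun p => (edgeDhat G p.1 p.2 : ℚ))]
    have hz : ∑ p ∈ ((edgeFS G) ×ˢ (edgeFS G)).filter (fun p => ¬p.1 ≠ p.2),
        (edgeDhat G p.1 p.2 : ℚ) = 0 := by
      apply Finset.sum_eq_zero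
      intro p hp
      simp only [Finset.mem_filter, not_not] at hp
      rw [hp.2, edgeDhat_self]
      simp
    rw [hz, add_zero]
  -- Step 3: the quadratic term
  have step3 : (∑ p ∈ (Finset.univ : Finset (Fin n × Fin n)).filter (fun p => p.1 ≠ p.2),
        ∑ e ∈ edgeFS G, ∑ f ∈ edgeFS G,
          (if p.1 ∈ Dset φ e f ∧ p.2 ∈ Dset φ e f then (1 : ℚ) else 0)) =
      4 * ∑ p ∈ (Finset.univ : Finset (Fin n × Fin n)).filter (fun p => p.1 < p.2),
            ((mSide G φ p.1 p.2 true true * mSide G φ p.1 p.2 false false : ℕ) +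
             (mSide G φ p.1 p.2 true false * mSide G φ p.1 p.2 false true : ℕ) : ℚ) := by
    set F : Fin n × Fin n → ℚ := fun p =>
      ∑ i : Bool, ∑ j : Bool, (mSide G φ p.1 p.2 i j : ℚ) * (mSide G φ p.1 p.2 (!i) (!j) : ℚ)
       with hF
    have h0 : (∑ p ∈ (Finset.univ : Finset (Fin n × Fin n)).filter (fun p => p.1 ≠ p.2),
        ∑ e ∈ edgeFS G, ∑ f ∈ edgeFS G,
          (if p.1 ∈ Dset φ e f ∧ p.2 ∈ Dset φ e f then (1 : ℚ) else 0)) =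
        ∑ p ∈ (Finset.univ : Finset (Fin n × Fin n)).filter (fun p => p.1 ≠ p.2), F p :=
      Finset.sum_congr rfl fun p _ => count_kl G φ p.1 p.2
    have hFsymm : ∀ k l : Fin n, F (l, k) = F (k, l) := by
      intro k l
      rw [hF]
      dsimp only
      rw [Finset.sum_comm]
      refine Finset.sum_congr rfl fun j _ => Finset.sum_congr rfl fun i _ => ?_
      rw [mSide_symm G φ k l j i, mSide_symm G φ k l (!j) (!i)]
    have hsplit : (Finset.univ : Finset (Fin n × Fin n)).filter (fun p => p.1 ≠ p.2) =
        ((Finset.univ : Finset (Fin n × Fin n)).filter (fun p => p.1 < p.2)) ∪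
        ((Finset.univ : Finset (Fin n × Fin n)).filter (fun p => p.2 < p.1)) := by
      ext p
      simp only [Finset.mem_filter, Finset.mem_univ, true_and, Finset.mem_union, ne_eq]
      constructor
      · intro h; exact lt_or_gt_of_ne h
      · rintro (h | h)
        · exact ne_of_lt h
        · exact (ne_of_lt h).symm
    have hdisj : Disjoint
        ((Finset.univ : Finset (Fin n × Fin n)).filter (fun p => p.1 < p.2))
        ((Finset.univ : Finset (Fin n × Fin n)).filter (fun p => p.2 < p.1)) := by
      rw [Finset.disjoint_left]
      intro p hp hq
      simp only [Finset.mem_filter] at hp hq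
      exact absurd hq.2 (not_lt_of_gt hp.2)
    have hswap : (∑ p ∈ (Finset.univ : Finset (Fin n × Fin n)).filter (fun p => p.2 < p.1), F p)
        = ∑ p ∈ (Finset.univ : Finset (Fin n × Fin n)).filter (fun p => p.1 < p.2), F p := by
      refine Finset.sum_bij' (fun p _ => (p.2, p.1)) (fun p _ => (p.2, p.1)) ?_ ?_ ?_ ?_ ?_
      · intro p hp; simp only [Finset.mem_filter, Finset.mem_univ, true_and] at hp ⊢; exact hp
      · intro p hp; simp only [Finset.mem_filter, Finset.mem_univ, true_and] at hp ⊢; exact hp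
      · intro p _; rfl
      · intro p _; rfl
      · intro p _; exact (hFsymm p.1 p.2).symm
    have hFval : ∀ p : Fin n × Fin n, F p =
        2 * ((mSide G φ p.1 p.2 true true * mSide G φ p.1 p.2 false false : ℕ) +
             (mSide G φ p.1 p.2 true false * mSide G φ p.1 p.2 false true : ℕ) : ℚ) := by
      intro p
      rw [hF]
      simp only [Fintype.sum_bool, Bool.not_true, Bool.not_false]
      push_cast
      ring
    rw [h0, hsplit, Finset.sum_union hdisj, hswap, ← two_mul]
    rw [show (4 : ℚ) = 2 * 2 by norm_num, mul_assoc]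
    congr 1
    rw [Finset.mul_sum]
    exact Finset.sum_congr rfl fun p _ => hFval p
  rw [step1, step2, step3]
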